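/- arXiv:2207.11058 — 9 statements merged into one kernel-verified Lean document; each statement's English description precedes it below -/
import Mathlib

section
/- A locality set (X, ⊤) is regular if and only if for all n ≥ 1 and all α, β, α_1, …, α_n, β_1, …, β_n ∈ X, whenever the pairs (α, β_1), (α_1, β_1), (α_1, β_2), (α_2, β_2), …, (α_n, β_n), (α_n, β) all lie in ⊤, one has (α, β) ∈ ⊤. -/
/-- A locality set `(X, ⊤)` is regular if whenever
`(α, β₁), (α₁, β₁), (α₁, β) ∈ ⊤` one also has `(α, β) ∈ ⊤`. -/
def IsRegularLocality {X : Type} (top : X → X → Prop) : Prop :=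
  ∀ α β α₁ β₁, top α β₁ → top α₁ β₁ → top α₁ β → top α β

/-- A locality set `(X, ⊤)` is regular if and only if for all `n ≥ 1` and all
`α, β, α₁, …, αₙ, β₁, …, βₙ ∈ X`, whenever the pairs
`(α, β₁), (α₁, β₁), (α₁, β₂), (α₂, β₂), …, (αₙ, βₙ), (αₙ, β)` all lie in `⊤`,
one has `(α, β) ∈ ⊤`. -/
theorem isRegularLocality_iff_chain {X : Type} (top : X → X → Prop) :
    IsRegularLocality top ↔
      ∀ (n : ℕ), 1 ≤ n → ∀ (α β : X) (a b : ℕ → X),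
        top α (b 1) →
        (∀ i, 1 ≤ i → i ≤ n → top (a i) (b i)) →
        (∀ i, 1 ≤ i → i < n → top (a i) (b (i + 1))) →
        top (a n) β →
        top α β := by
  constructor
  · intro hreg n hn
    induction n, hn using Nat.le_induction with
    | base =>
      intro α β a b h1 hb _ hlast
      exact hreg α β (a 1) (b 1) h1 (hb 1 le_rfl le_rfl) hlast
    | succ n hn ih =>
      intro α β a b h1 hb hc hlast
      have hmid : top α (b (n + 1)) :=
        ih α (b (n + 1)) a b h1
          (fun i h1i hin => hb i h1i (hin.trans (Nat.le_succ n)))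
          (fun i h1i hin => hc i h1i (hin.trans_le (Nat.le_succ n)))
          (hc n hn (Nat.lt_succ_self n))
      exact hreg α β (a (n + 1)) (b (n + 1)) hmid
        (hb (n + 1) (Nat.le_add_left 1 n) le_rfl) hlast
  · intro h α β α₁ β₁ h1 h2 h3
    exact h 1 le_rfl α β (fun _ => α₁) (fun _ => β₁) h1
      (fun _ _ _ => h2) (fun i hi hi' => absurd (hi.trans_lt hi') (by simp)) h3
end

section
/- Let (X, ⊤) be a regular locality set and let Q_X = (Q0, Q1, s_Q, t_Q) be the quiver of X. Then for all α, β ∈ X (= Q1), one has (α, β) ∈ ⊤ if and only if t_Q(α) = s_Q(β). -/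
/-- On the disjoint union `X_s ⊔ X_t` of two copies of `X` (`Sum.inl` being the
source copy `X_s` and `Sum.inr` the target copy `X_t`), the relation
`α_t ∼ β_s` whenever `(α, β) ∈ ⊤`. -/
def locSim {X : Type} (top : X → X → Prop) : X ⊕ X → X ⊕ X → Prop :=
  fun u v => ∃ α β, top α β ∧ u = Sum.inr α ∧ v = Sum.inl β

/-- The vertex set of the quiver of a locality set `(X, ⊤)`: the quotient of
`X_s ⊔ X_t` by the equivalence relation generated by `∼`. -/
def locVertices {X : Type} (top : X → X → Prop) : Type :=
  Quot (locSim top)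

/-- The source map of the quiver of a locality set: `s_Q(α)` is the class of `α_s`. -/
def locSrc {X : Type} (top : X → X → Prop) (α : X) : locVertices top :=
  Quot.mk (locSim top) (Sum.inl α)

/-- The target map of the quiver of a locality set: `t_Q(α)` is the class of `α_t`. -/
def locTgt {X : Type} (top : X → X → Prop) (α : X) : locVertices top :=
  Quot.mk (locSim top) (Sum.inr α)

/-- Explicit equivalence relation describing the closure of `locSim`. -/
def locE {X : Type} (top : X → X → Prop) : X ⊕ X → X ⊕ X → Prop
  | Sum.inr a, Sum.inl b => top a b
  | Sum.inl b, Sum.inr a => top a b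
  | Sum.inr a, Sum.inr a' => a = a' ∨ ∃ c, top a c ∧ top a' c
  | Sum.inl b, Sum.inl b' => b = b' ∨ ∃ c, top c b ∧ top c b'

lemma locE_equiv {X : Type} (top : X → X → Prop) (hreg : IsRegularLocality top) :
    Equivalence (locE top) := by
  constructor
  · rintro (a | a) <;> exact Or.inl rfl
  · rintro (a | a) (b | b) h
    · exact h.elim (fun h => Or.inl h.symm) (fun ⟨c, h1, h2⟩ => Or.inr ⟨c, h2, h1⟩)
    · exact h
    · exact h
    · exact h.elim (fun h => Or.inl h.symm) (fun ⟨c, h1, h2⟩ => Or.inr ⟨c, h2, h1⟩)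
  · rintro (a | a) (b | b) (c | c) h1 h2
    · rcases h1 with rfl | ⟨d, hd1, hd2⟩
      · exact h2
      rcases h2 with rfl | ⟨e, he1, he2⟩
      · exact Or.inr ⟨d, hd1, hd2⟩
      · exact Or.inr ⟨d, hd1, hreg d c e b hd2 he1 he2⟩
    · rcases h1 with rfl | ⟨d, hd1, hd2⟩
      · exact h2
      · exact hreg c a d b h2 hd2 hd1
    · exact Or.inr ⟨b, h1, h2⟩
    · rcases h2 with rfl | ⟨d, hd1, hd2⟩
      · exact h1
      · exact hreg c a b d hd2 hd1 h1
    · rcases h2 with rfl | ⟨d, hd1, hd2⟩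
      · exact h1
      · exact hreg a c d b h1 hd1 hd2
    · exact Or.inr ⟨b, h1, h2⟩
    · rcases h1 with rfl | ⟨d, hd1, hd2⟩
      · exact h2
      · exact hreg a c b d hd1 hd2 h2
    · rcases h1 with rfl | ⟨d, hd1, hd2⟩
      · exact h2
      rcases h2 with rfl | ⟨e, he1, he2⟩
      · exact Or.inr ⟨d, hd1, hd2⟩
      · exact Or.inr ⟨d, hd1, hreg c d b e he2 he1 hd2⟩

/-- Let `(X, ⊤)` be a regular locality set and let `Q_X = (Q0, Q1, s_Q, t_Q)` be
the quiver of `X`. Then for all `α, β ∈ X (= Q1)`, one has `(α, β) ∈ ⊤` if and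
only if `t_Q(α) = s_Q(β)`. -/
theorem regular_top_iff_tgt_eq_src {X : Type} (top : X → X → Prop)
    (hreg : IsRegularLocality top) (α β : X) :
    top α β ↔ locTgt top α = locSrc top β := by
  constructor
  · intro h
    exact Quot.sound ⟨α, β, h, rfl, rfl⟩
  · intro h
    have hE := locE_equiv top hreg
    have hf : ∀ u v, locSim top u v → Quot.mk (locE top) u = Quot.mk (locE top) v := by
      rintro u v ⟨a, b, hab, rfl, rfl⟩
      exact Quot.sound hab
    have := congrArg (Quot.lift (Quot.mk (locE top)) hf) h
    simp only [locTgt, locSrc] at this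
    have h2 : Relation.EqvGen (locE top) (Sum.inr α) (Sum.inl β) := Quot.eqvGen_exact this
    exact (Equivalence.eqvGen_iff hE).mp h2
end

section
/- Let (X, ⊤_X) be a locality set, let Q_X be the quiver of X, and let (X_{Q_X}, ⊤_{X_{Q_X}}) be the locality set of Q_X, with φ_X : X → X_{Q_X} the identity map on underlying sets (a locality map since ⊤_X ⊆ ⊤_{X_{Q_X}}). Then (X_{Q_X}, ⊤_{X_{Q_X}}) together with φ_X is a regular hull of (X, ⊤_X): for every regular locality set (X', ⊤') and every locality map ψ : X → X', there is a unique locality map ψ̃ : X_{Q_X} → X' with ψ̃ ∘ φ_X = ψ. -/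
/-- The locality relation of the locality set of the quiver `Q_X` of a locality
set `(X, ⊤)`: the arrow set of `Q_X` is `X` itself, and
`⊤_{X_{Q_X}} = {(α, β) : t_Q(α) = s_Q(β)}`. -/
def topQX {X : Type} (top : X → X → Prop) : X → X → Prop :=
  fun α β => locTgt top α = locSrc top β

/-- Auxiliary "good" relation on `X ⊕ X` transported through `ψ`. -/
def locGood {X X' : Type} (top' : X' → X' → Prop) (ψ : X → X') :
    X ⊕ X → X ⊕ X → Prop
  | Sum.inr α, Sum.inl β => top' (ψ α) (ψ β)
  | Sum.inl β, Sum.inr α => top' (ψ α) (ψ β)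
  | Sum.inl β, Sum.inl β' => β = β' ∨ ∃ α, top' (ψ α) (ψ β) ∧ top' (ψ α) (ψ β')
  | Sum.inr α, Sum.inr α' => α = α' ∨ ∃ β, top' (ψ α) (ψ β) ∧ top' (ψ α') (ψ β)

lemma locGood_symm {X X' : Type} (top' : X' → X' → Prop) (ψ : X → X')
    {u v : X ⊕ X} (h : locGood top' ψ u v) : locGood top' ψ v u := by
  rcases u with b | a <;> rcases v with b' | a' <;> simp only [locGood] at h ⊢
  · rcases h with h | ⟨α, h1, h2⟩
    · exact Or.inl h.symm
    · exact Or.inr ⟨α, h2, h1⟩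
  · exact h
  · exact h
  · rcases h with h | ⟨β, h1, h2⟩
    · exact Or.inl h.symm
    · exact Or.inr ⟨β, h2, h1⟩

lemma locGood_trans {X X' : Type} {top' : X' → X' → Prop}
    (hreg : IsRegularLocality top') (ψ : X → X')
    {u v w : X ⊕ X} (huv : locGood top' ψ u v) (hvw : locGood top' ψ v w) :
    locGood top' ψ u w := by
  rcases u with b | a <;> rcases v with b' | a' <;> rcases w with b'' | a'' <;>
    simp only [locGood] at huv hvw ⊢
  · -- inl, inl, inl
    rcases huv with h | ⟨α, h1, h2⟩
    · subst h; exact hvw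
    rcases hvw with h | ⟨α', h3, h4⟩
    · subst h; exact Or.inr ⟨α, h1, h2⟩
    · exact Or.inr ⟨α, h1, hreg _ _ _ _ h2 h3 h4⟩
  · -- inl, inl, inr
    rcases huv with h | ⟨α, h1, h2⟩
    · subst h; exact hvw
    · exact hreg _ _ _ _ hvw h2 h1
  · -- inl, inr, inl
    exact Or.inr ⟨a', huv, hvw⟩
  · -- inl, inr, inr
    rcases hvw with h | ⟨β, h1, h2⟩
    · subst h; exact huv
    · exact hreg _ _ _ _ h2 h1 huv
  · -- inr, inl, inl
    rcases hvw with h | ⟨α, h1, h2⟩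
    · subst h; exact huv
    · exact hreg _ _ _ _ huv h1 h2
  · -- inr, inl, inr
    exact Or.inr ⟨b', huv, hvw⟩
  · -- inr, inr, inl
    rcases huv with h | ⟨β, h1, h2⟩
    · subst h; exact hvw
    · exact hreg _ _ _ _ h1 h2 hvw
  · -- inr, inr, inr
    rcases huv with h | ⟨β, h1, h2⟩
    · subst h; exact hvw
    rcases hvw with h | ⟨β', h3, h4⟩
    · subst h; exact Or.inr ⟨β, h1, h2⟩
    · exact Or.inr ⟨β', hreg _ _ _ _ h1 h2 h3, h4⟩

lemma locGood_of_eqvGen {X X' : Type} {top : X → X → Prop} {top' : X' → X' → Prop}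
    (hreg : IsRegularLocality top') (ψ : X → X')
    (hψ : ∀ α β, top α β → top' (ψ α) (ψ β))
    {u v : X ⊕ X} (h : Relation.EqvGen (locSim top) u v) : locGood top' ψ u v := by
  induction h with
  | rel u v h =>
    obtain ⟨α, β, hab, rfl, rfl⟩ := h
    exact hψ α β hab
  | refl u => rcases u with b | a <;> exact Or.inl rfl
  | symm u v _ ih => exact locGood_symm top' ψ ih
  | trans u v w _ _ ih1 ih2 => exact locGood_trans hreg ψ ih1 ih2

lemma key_lemma {X X' : Type} (top : X → X → Prop) (top' : X' → X' → Prop)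
    (hreg : IsRegularLocality top') (ψ : X → X')
    (hψ : ∀ α β, top α β → top' (ψ α) (ψ β))
    {α β : X} (h : topQX top α β) : top' (ψ α) (ψ β) :=
  locGood_of_eqvGen hreg ψ hψ (Quot.eqvGen_exact h)

/-- Let `(X, ⊤_X)` be a locality set and `(X_{Q_X}, ⊤_{X_{Q_X}})` the locality set
of the quiver `Q_X` of `X`, whose underlying set is `X` itself, with
`φ_X : X → X_{Q_X}` the identity map.  Then `(X, ⊤_{X_{Q_X}})` is regular, `φ_X` is
a locality map, and `(X_{Q_X}, ⊤_{X_{Q_X}}, φ_X)` is a regular hull of `(X, ⊤_X)`: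
for every regular locality set `(X', ⊤')` and every locality map `ψ : X → X'`,
there is a unique locality map `ψ̃ : X_{Q_X} → X'` with `ψ̃ ∘ φ_X = ψ`. -/
theorem localitySet_of_quiver_is_regular_hull {X : Type} (top : X → X → Prop) :
    IsRegularLocality (topQX top) ∧
    (∀ α β, top α β → topQX top α β) ∧
    (∀ (X' : Type) (top' : X' → X' → Prop), IsRegularLocality top' →
      ∀ ψ : X → X', (∀ α β, top α β → top' (ψ α) (ψ β)) →
        ∃! ψt : X → X',
          (∀ α β, topQX top α β → top' (ψt α) (ψt β)) ∧
          ψt ∘ (id : X → X) = ψ) := by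

  refine ⟨?_, ?_, ?_⟩
  · intro α β α₁ β₁ h1 h2 h3
    unfold topQX at *
    rw [h1, ← h2, h3]
  · intro α β h
    exact Quot.sound ⟨α, β, h, rfl, rfl⟩
  · intro X' top' hreg ψ hψ
    refine ⟨ψ, ⟨fun α β h => key_lemma top top' hreg ψ hψ h, rfl⟩, ?_⟩
    rintro ψt ⟨-, h⟩
    simpa using h
end

section
/- Let Q = (Q0, Q1, s, t) be a quiver, let (X_Q, ⊤_{X_Q}) be the locality set of Q, and let Q_{X_Q} = (Q0', Q1', s', t') be the quiver of X_Q. Then Q1' = Q1, and for all arrows α, β ∈ Q1 one has t'(α) = s'(β) if and only if t(α) = s(β); consequently the nonempty paths of Q_{X_Q} are exactly the nonempty paths of Q, i.e. the path locality semigroups P_{Q_{X_Q}} and P_Q coincide. -/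

private def locEval {Q0 Q1 : Type} (s t : Q1 → Q0) : Q1 ⊕ Q1 → Q0
  | Sum.inl β => s β
  | Sum.inr α => t α

private lemma key {Q0 Q1 : Type} (s t : Q1 → Q0) (α β : Q1) :
    (locTgt (fun a b : Q1 => t a = s b) α = locSrc (fun a b : Q1 => t a = s b) β)
      ↔ t α = s β := by
  constructor
  · intro h
    have := congrArg (Quot.lift (locEval s t) (by
      rintro u v ⟨a, b, hab, rfl, rfl⟩
      simpa [locEval] using hab)) h
    simpa [locTgt, locSrc, locEval] using this
  · intro h
    exact Quot.sound ⟨α, β, h, rfl, rfl⟩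

/-- Let `Q = (Q0, Q1, s, t)` be a quiver, `(X_Q, ⊤_{X_Q})` its locality set
(`X_Q = Q1`, `⊤_{X_Q} = {(α,β) : t α = s β}`), and `Q_{X_Q} = (Q0', Q1', s', t')`
the quiver of `X_Q`, whose arrow set `Q1'` is `Q1` itself.  Then for all arrows
`α, β ∈ Q1` one has `t'(α) = s'(β)` iff `t(α) = s(β)`; consequently the nonempty
paths of `Q_{X_Q}` are exactly the nonempty paths of `Q`, and the path locality
semigroups coincide: the locality relations `t'(p) = s'(q)` and `t(p) = s(q)`
on nonempty paths agree (concatenation being the same in both). -/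
theorem paths_of_derived_quiver_eq {Q0 Q1 : Type} (s t : Q1 → Q0) :
    (∀ α β : Q1,
      (locTgt (fun a b : Q1 => t a = s b) α = locSrc (fun a b : Q1 => t a = s b) β)
        ↔ t α = s β) ∧
    (∀ l : List Q1,
      l.Chain' (fun a b =>
          locTgt (fun a b : Q1 => t a = s b) a = locSrc (fun a b : Q1 => t a = s b) b)
        ↔ l.Chain' (fun a b => t a = s b)) ∧
    (∀ (l m : List Q1) (hl : l ≠ []) (hm : m ≠ []),
      (locTgt (fun a b : Q1 => t a = s b) (l.getLast hl)
          = locSrc (fun a b : Q1 => t a = s b) (m.head hm))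
        ↔ t (l.getLast hl) = s (m.head hm)) := by
  refine ⟨key s t, fun l => ?_, fun l m hl hm => key s t _ _⟩
  induction l with
  | nil => simp [List.Chain']
  | cons a l ih =>
    cases l with
    | nil => simp [List.Chain']
    | cons b l => simp only [List.Chain'] at ih ⊢; simp [List.isChain_cons_cons, key s t a b, ih]
end

section
/- Let Q = (Q0, Q1, s, t) be a quiver and let Q_{X_Q} = (Q0*, Q1*, s*, t*) be the quiver of the locality set X_Q of Q, so that Q1* = Q1. Define φ = (φ0, φ1) : Q_{X_Q} → Q by φ1 = id on arrows and φ0(class of α_s) = s(α), φ0(class of α_t) = t(α). Then φ is a well-defined quiver homomorphism, and (Q_{X_Q}, φ) is a full cover of Q: for every full quiver Q' and every quiver homomorphism ψ : Q' → Q, there exists a unique quiver homomorphism ψ̃ : Q' → Q_{X_Q} with φ ∘ ψ̃ = ψ. -/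
/-- A quiver is full if every vertex lies in `im(s) ∪ im(t)`, and every vertex
to which two or more arrows are attached lies in `im(s) ∩ im(t)`. -/
def IsFullQuiver {V A : Type} (s t : A → V) : Prop :=
  (∀ v : V, (∃ a, s a = v) ∨ (∃ a, t a = v)) ∧
  (∀ v : V, (∃ a b : A, a ≠ b ∧ (s a = v ∨ t a = v) ∧ (s b = v ∨ t b = v)) →
    ((∃ a, s a = v) ∧ (∃ a, t a = v)))

/-- The vertex component `φ0` of the quiver homomorphism
`φ : Q_{X_Q} → Q`, sending the class of `α_s` to `s(α)` and the class of
`α_t` to `t(α)`. -/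
def coverMap {Q0 Q1 : Type} (s t : Q1 → Q0) :
    locVertices (fun a b : Q1 => t a = s b) → Q0 :=
  Quot.lift (Sum.elim s t) (by
    rintro u v ⟨α, β, hab, rfl, rfl⟩
    simpa using hab)

/-- Let `Q = (Q0, Q1, s, t)` be a quiver and `Q_{X_Q} = (Q0*, Q1*, s*, t*)` the
quiver of the locality set `X_Q` of `Q`, so `Q1* = Q1`.  The pair
`φ = (φ0, φ1)` with `φ1 = id` and `φ0` as above is a quiver homomorphism
`Q_{X_Q} → Q`, and `(Q_{X_Q}, φ)` is a full cover of `Q`: for every full quiver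
`Q' = (V, A, s', t')` and every quiver homomorphism `ψ = (ψ0, ψ1) : Q' → Q`,
there is a unique quiver homomorphism `ψ̃ = (ψ̃0, ψ̃1) : Q' → Q_{X_Q}` with
`φ ∘ ψ̃ = ψ`. -/
theorem quiver_of_localitySet_is_full_cover {Q0 Q1 : Type} (s t : Q1 → Q0) :
    (∀ α : Q1, coverMap s t (locSrc (fun a b : Q1 => t a = s b) α) = s α) ∧
    (∀ α : Q1, coverMap s t (locTgt (fun a b : Q1 => t a = s b) α) = t α) ∧
    (∀ (V A : Type) (s' t' : A → V), IsFullQuiver s' t' →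
      ∀ (ψ0 : V → Q0) (ψ1 : A → Q1),
        (∀ a : A, s (ψ1 a) = ψ0 (s' a)) → (∀ a : A, t (ψ1 a) = ψ0 (t' a)) →
        ∃! p : (V → locVertices (fun a b : Q1 => t a = s b)) × (A → Q1),
          ((∀ a : A, locSrc (fun a b : Q1 => t a = s b) (p.2 a) = p.1 (s' a)) ∧
           (∀ a : A, locTgt (fun a b : Q1 => t a = s b) (p.2 a) = p.1 (t' a))) ∧
          ((∀ v : V, coverMap s t (p.1 v) = ψ0 v) ∧
           (∀ a : A, p.2 a = ψ1 a))) := by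
  refine ⟨fun α => rfl, fun α => rfl, fun V A s' t' hfull ψ0 ψ1 hs ht => ?_⟩
  set top : Q1 → Q1 → Prop := fun a b => t a = s b with htop
  -- key lemmas
  have key3 : ∀ a b : A, t' a = s' b → locTgt top (ψ1 a) = locSrc top (ψ1 b) := by
    intro a b hab
    apply Quot.sound
    refine ⟨ψ1 a, ψ1 b, ?_, rfl, rfl⟩
    show t (ψ1 a) = s (ψ1 b)
    rw [ht a, hab, ← hs b]
  have key1 : ∀ a b : A, s' a = s' b → locSrc top (ψ1 a) = locSrc top (ψ1 b) := by
    intro a b hab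
    by_cases hab' : a = b
    · rw [hab']
    · obtain ⟨_, c, hc⟩ := (hfull.2 (s' a) ⟨a, b, hab', Or.inl rfl, Or.inl hab.symm⟩)
      rw [← key3 c a hc, key3 c b (hc.trans hab)]
  have key2 : ∀ a b : A, t' a = t' b → locTgt top (ψ1 a) = locTgt top (ψ1 b) := by
    intro a b hab
    by_cases hab' : a = b
    · rw [hab']
    · obtain ⟨⟨c, hc⟩, _⟩ := (hfull.2 (t' a) ⟨a, b, hab', Or.inr rfl, Or.inr hab.symm⟩)
      rw [key3 a c hc.symm, key3 b c (hab ▸ hc.symm)]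
  classical
  set F : V → locVertices top := fun v =>
    if h : ∃ a, s' a = v then locSrc top (ψ1 h.choose)
    else locTgt top (ψ1 (((hfull.1 v).resolve_left h).choose)) with hF
  have hFs : ∀ a : A, F (s' a) = locSrc top (ψ1 a) := by
    intro a
    have h : ∃ b, s' b = s' a := ⟨a, rfl⟩
    simp only [hF]
    rw [dif_pos h]
    exact key1 h.choose a h.choose_spec
  have hFt : ∀ a : A, F (t' a) = locTgt top (ψ1 a) := by
    intro a
    simp only [hF]
    by_cases h : ∃ b, s' b = t' a
    · rw [dif_pos h]
      exact (key3 a h.choose h.choose_spec.symm).symm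
    · rw [dif_neg h]
      exact key2 _ a ((hfull.1 (t' a)).resolve_left h).choose_spec
  have hFcov : ∀ v : V, coverMap s t (F v) = ψ0 v := by
    intro v
    rcases hfull.1 v with ⟨a, ha⟩ | ⟨a, ha⟩
    · rw [← ha, hFs a]; exact (hs a)
    · rw [← ha, hFt a]; exact (ht a)
  refine ⟨⟨F, ψ1⟩, ⟨⟨fun a => (hFs a).symm, fun a => (hFt a).symm⟩,
    hFcov, fun _ => rfl⟩, ?_⟩
  rintro ⟨G, χ⟩ ⟨⟨hGs, hGt⟩, _, hχ⟩
  dsimp only at hGs hGt hχ ⊢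
  have hG : G = F := by
    funext v
    rcases hfull.1 v with ⟨a, ha⟩ | ⟨a, ha⟩
    · rw [← ha, ← hGs a, hχ a, hFs a]
    · rw [← ha, ← hGt a, hχ a, hFt a]
  have hχ' : χ = ψ1 := funext hχ
  rw [hG, hχ']
end

section
/- Let Q = (Q0, Q1, s, t) be a full quiver and let Q_{X_Q} = (Q0', Q1', s', t') be the quiver of the locality set X_Q of Q, so that Q1' = Q1. Then Q_{X_Q} is isomorphic to Q: there is a bijection f : Q0 → Q0' such that for all x, y ∈ Q0 and α ∈ Q1, one has (s(α) = x and t(α) = y) if and only if (s'(α) = f(x) and t'(α) = f(y)). -/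
/-- Let `Q = (Q0, Q1, s, t)` be a full quiver and `Q_{X_Q} = (Q0', Q1', s', t')`
the quiver of the locality set `X_Q` of `Q`, so `Q1' = Q1`.  Then `Q_{X_Q}` is
isomorphic to `Q`: there is a bijection `f : Q0 → Q0'` such that for all
`x, y ∈ Q0` and `α ∈ Q1`, one has `s(α) = x` and `t(α) = y` iff
`s'(α) = f(x)` and `t'(α) = f(y)`. -/
theorem full_quiver_iso_derived_quiver {Q0 Q1 : Type} (s t : Q1 → Q0)
    (hfull : IsFullQuiver s t) :
    ∃ f : Q0 → locVertices (fun α β : Q1 => t α = s β),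
      Function.Bijective f ∧
      ∀ (x y : Q0) (α : Q1),
        (s α = x ∧ t α = y) ↔
        (locSrc (fun α β : Q1 => t α = s β) α = f x ∧
         locTgt (fun α β : Q1 => t α = s β) α = f y) := by

  classical
  set top := fun α β : Q1 => t α = s β with htop
  let g : Q1 ⊕ Q1 → Q0 := Sum.elim s t
  have hg : ∀ u v, locSim top u v → g u = g v := by
    rintro _ _ ⟨α, β, h, rfl, rfl⟩
    exact h
  let G : locVertices top → Q0 := Quot.lift g hg
  have hGs : ∀ α, G (locSrc top α) = s α := fun α => rfl
  have hGt : ∀ α, G (locTgt top α) = t α := fun α => rfl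
  have key : ∀ u v : Q1 ⊕ Q1, g u = g v →
      Quot.mk (locSim top) u = Quot.mk (locSim top) v := by
    intro u v huv
    rcases u with α | α <;> rcases v with β | β
    · by_cases hab : α = β
      · subst hab; rfl
      · obtain ⟨-, c, hc⟩ := hfull.2 (s α) ⟨α, β, hab, Or.inl rfl, Or.inl huv.symm⟩
        have h1 : Quot.mk (locSim top) (Sum.inr c) = Quot.mk _ (Sum.inl α) :=
          Quot.sound ⟨c, α, hc, rfl, rfl⟩
        have h2 : Quot.mk (locSim top) (Sum.inr c) = Quot.mk _ (Sum.inl β) :=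
          Quot.sound ⟨c, β, hc.trans huv, rfl, rfl⟩
        exact h1.symm.trans h2
    · exact (Quot.sound ⟨β, α, huv.symm, rfl, rfl⟩).symm
    · exact Quot.sound ⟨α, β, huv, rfl, rfl⟩
    · by_cases hab : α = β
      · subst hab; rfl
      · obtain ⟨⟨c, hc⟩, -⟩ := hfull.2 (t α) ⟨α, β, hab, Or.inr rfl, Or.inr huv.symm⟩
        have h1 : Quot.mk (locSim top) (Sum.inr α) = Quot.mk _ (Sum.inl c) :=
          Quot.sound ⟨α, c, hc.symm, rfl, rfl⟩
        have h2 : Quot.mk (locSim top) (Sum.inr β) = Quot.mk _ (Sum.inl c) :=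
          Quot.sound ⟨β, c, huv.symm.trans hc.symm, rfl, rfl⟩
        exact h1.trans h2.symm
  have hinj : Function.Injective G := by
    intro u v
    refine Quot.induction_on₂ u v ?_
    intro a b hab
    exact key a b hab
  have hsurj : Function.Surjective G := by
    intro v
    rcases hfull.1 v with ⟨a, ha⟩ | ⟨a, ha⟩
    · exact ⟨locSrc top a, ha⟩
    · exact ⟨locTgt top a, ha⟩
  let e := Equiv.ofBijective G ⟨hinj, hsurj⟩
  refine ⟨e.symm, e.symm.bijective, ?_⟩
  intro x y α
  have hs : locSrc top α = e.symm x ↔ s α = x := by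
    rw [Equiv.eq_symm_apply]
    exact Iff.rfl
  have ht : locTgt top α = e.symm y ↔ t α = y := by
    rw [Equiv.eq_symm_apply]
    exact Iff.rfl
  rw [hs, ht]
end

section
/- Let (X, ⊤_X) be a regular locality set, let Q_X be the quiver of X, and let (X_{Q_X}, ⊤_{X_{Q_X}}) be the locality set of the quiver Q_X. Then (X_{Q_X}, ⊤_{X_{Q_X}}) = (X, ⊤_X): the underlying sets are equal and ⊤_{X_{Q_X}} = ⊤_X. -/
def locRel {X : Type} (top : X → X → Prop) : X ⊕ X → X ⊕ X → Prop
  | Sum.inl β, Sum.inl β' => β = β' ∨ ∃ α, top α β ∧ top α β'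
  | Sum.inl β, Sum.inr α => top α β
  | Sum.inr α, Sum.inl β => top α β
  | Sum.inr α, Sum.inr α' => α = α' ∨ ∃ β, top α β ∧ top α' β

theorem locRel_trans {X : Type} {top : X → X → Prop} (hreg : IsRegularLocality top)
    {u v w : X ⊕ X} (h1 : locRel top u v) (h2 : locRel top v w) : locRel top u w := by
  rcases u with β | α <;> rcases v with β' | α' <;> rcases w with β'' | α'' <;>
    simp only [locRel] at *
  -- inl inl inl
  · rcases h1 with rfl | ⟨α, h1, h1'⟩
    · exact h2
    rcases h2 with rfl | ⟨α', h2, h2'⟩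
    · exact Or.inr ⟨α, h1, h1'⟩
    · exact Or.inr ⟨α, h1, hreg α β'' α' β' h1' h2 h2'⟩
  -- inl inl inr
  · rcases h1 with rfl | ⟨α, h1, h1'⟩
    · exact h2
    · exact hreg α'' β α β' h2 h1' h1
  -- inl inr inl
  · exact Or.inr ⟨α', h1, h2⟩
  -- inl inr inr
  · rcases h2 with rfl | ⟨β₂, h2, h2'⟩
    · exact h1
    · exact hreg α'' β α' β₂ h2' h2 h1
  -- inr inl inl
  · rcases h2 with rfl | ⟨α₂, h2, h2'⟩
    · exact h1
    · exact hreg α β'' α₂ β' h1 h2 h2'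
  -- inr inl inr
  · exact Or.inr ⟨β', h1, h2⟩
  -- inr inr inl
  · rcases h1 with rfl | ⟨β, h1, h1'⟩
    · exact h2
    · exact hreg α β'' α' β h1 h1' h2
  -- inr inr inr
  · rcases h1 with rfl | ⟨β, h1, h1'⟩
    · exact h2
    rcases h2 with rfl | ⟨β', h2, h2'⟩
    · exact Or.inr ⟨β, h1, h1'⟩
    · exact Or.inr ⟨β', hreg α β' α' β h1 h1' h2, h2'⟩

theorem locRel_of_eqvGen {X : Type} {top : X → X → Prop} (hreg : IsRegularLocality top)
    {u v : X ⊕ X} (h : Relation.EqvGen (locSim top) u v) : locRel top u v := by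
  induction h with
  | rel u v h => obtain ⟨α, β, h, rfl, rfl⟩ := h; exact h
  | refl u => rcases u with β | α <;> exact Or.inl rfl
  | symm u v _ ih =>
      rcases u with β | α <;> rcases v with β' | α' <;> simp only [locRel] at * <;>
        first
        | exact ih
        | exact Or.imp Eq.symm (fun ⟨x, h1, h2⟩ => ⟨x, h2, h1⟩) ih
  | trans u v w _ _ ih1 ih2 => exact locRel_trans hreg ih1 ih2

/-- Let `(X, ⊤_X)` be a regular locality set, `Q_X` its quiver, and
`(X_{Q_X}, ⊤_{X_{Q_X}})` the locality set of the quiver `Q_X`.  Then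
`(X_{Q_X}, ⊤_{X_{Q_X}}) = (X, ⊤_X)`: the underlying sets are equal (both are
`X`) and `⊤_{X_{Q_X}} = ⊤_X`. -/
theorem localitySet_of_quiver_of_regular_localitySet_eq {X : Type}
    (top : X → X → Prop) (hreg : IsRegularLocality top) :
    (fun α β : X => locTgt top α = locSrc top β) = top := by
  funext α β
  apply propext
  constructor
  · intro h
    exact locRel_of_eqvGen hreg (Quot.eqvGen_exact h)
  · intro h
    exact Quot.sound ⟨α, β, h, rfl, rfl⟩
end

section
/- Let (S, ⊤_S) be a fine locality semigroup, let (X, ⊤_X) be a locality set, let f : (X, ⊤_X) → (S, ⊤_S) be a locality map, let n ≥ 2, and let x_1, …, x_n ∈ X with (x_i, x_{i+1}) ∈ ⊤_X for i = 1, …, n−1. Then the iterated products f(x_1)⋯f(x_{n−1}) and f(x_2)⋯f(x_n) are defined in S, and (f(x_1)⋯f(x_{n−1}), f(x_n)) ∈ ⊤_S and (f(x_1), f(x_2)⋯f(x_n)) ∈ ⊤_S. -/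
/-- A locality semigroup `(S, ⊤, μ)`: a set with a locality relation `rel` and
a multiplication `mul` (only its values on pairs in `rel` are relevant, so that
`mul` encodes the partial multiplication `μ : ⊤ → S`), such that whenever
`(a,b), (a,c), (b,c) ∈ ⊤` one has `(ab,c), (a,bc) ∈ ⊤` and `(ab)c = a(bc)`. -/
structure LocalitySemigroup (S : Type) where
  rel : S → S → Prop
  mul : S → S → S
  rel_mul_left : ∀ {a b c : S}, rel a b → rel a c → rel b c → rel (mul a b) c
  rel_mul_right : ∀ {a b c : S}, rel a b → rel a c → rel b c → rel a (mul b c)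
  mul_assoc : ∀ {a b c : S}, rel a b → rel a c → rel b c →
    mul (mul a b) c = mul a (mul b c)

/-- A locality semigroup is fine if for all `a, b, c`: when `(a,b) ∈ ⊤`,
`(ab,c) ∈ ⊤` iff `(b,c) ∈ ⊤`; and when `(b,c) ∈ ⊤`, `(a,bc) ∈ ⊤` iff
`(a,b) ∈ ⊤`. -/
def LocalitySemigroup.Fine {S : Type} (L : LocalitySemigroup S) : Prop :=
  (∀ a b c : S, L.rel a b → (L.rel (L.mul a b) c ↔ L.rel b c)) ∧
  (∀ a b c : S, L.rel b c → (L.rel a (L.mul b c) ↔ L.rel a b))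

/-- `IsLocProd rel mul l u` asserts that the iterated product (by successive
multiplications) of the list `l` of elements is defined — each successive pair
being in the locality relation — and equals `u`. -/
inductive IsLocProd {S : Type} (rel : S → S → Prop) (mul : S → S → S) :
    List S → S → Prop
  | single (a : S) : IsLocProd rel mul [a] a
  | cons {l : List S} {u : S} (a : S) :
      rel a u → IsLocProd rel mul l u → IsLocProd rel mul (a :: l) (mul a u)

lemma aux_chain_prod {S : Type} (L : LocalitySemigroup S) (hfine : L.Fine) :
    ∀ (l : List S) (a : S), List.Chain L.rel a l →
    ∃ u, IsLocProd L.rel L.mul (a :: l) u ∧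
      (∀ t, L.rel (l.getLastD a) t → L.rel u t) ∧
      (∀ s, L.rel s a → L.rel s u) := by
  intro l
  induction l with
  | nil =>
    intro a _
    exact ⟨a, .single a, fun t ht => by simpa using ht, fun s hs => hs⟩
  | cons b l ih =>
    intro a h
    simp only [List.Chain, List.isChain_cons_cons] at h
    obtain ⟨hab, hchain⟩ := h
    obtain ⟨u, hprod, hlast, hhead⟩ := ih b hchain
    have hau : L.rel a u := hhead a hab
    refine ⟨L.mul a u, .cons a hau hprod, ?_, ?_⟩
    · intro t ht
      exact (hfine.1 a u t hau).mpr (hlast t (by simpa [List.getLastD_eq_getLast?, List.getLast?_cons] using ht))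
    · intro s hs
      exact (hfine.2 s a u hau).mpr hs

lemma aux_range_prod {S : Type} (L : LocalitySemigroup S) (hfine : L.Fine)
    (m : ℕ) (g : ℕ → S) (hg : ∀ i < m, L.rel (g i) (g (i + 1))) :
    ∃ u, IsLocProd L.rel L.mul ((List.range (m + 1)).map g) u ∧
      (∀ t, L.rel (g m) t → L.rel u t) ∧
      (∀ s, L.rel s (g 0) → L.rel s u) := by
  have h1 : (List.range (m + 1)).map g
      = g 0 :: (List.range m).map (fun i => g (i + 1)) := by
    rw [List.range_succ_eq_map]; simp [Function.comp]
  have h2 : ((List.range m).map (fun i => g (i + 1))).getLastD (g 0) = g m := by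
    cases m with
    | zero => simp
    | succ k =>
      rw [List.getLastD_eq_getLast?, List.getLast?_map, List.getLast?_range]
      simp
  have hchain : List.Chain' L.rel ((List.range (m + 1)).map g) := by
    show List.IsChain _ _
    rw [List.isChain_map, List.isChain_range_succ]
    exact hg
  rw [h1] at hchain
  obtain ⟨u, hprod, hlast, hhead⟩ :=
    aux_chain_prod L hfine ((List.range m).map (fun i => g (i + 1))) (g 0) hchain
  refine ⟨u, by rw [h1]; exact hprod, ?_, hhead⟩
  intro t ht
  exact hlast t (by rw [h2]; exact ht)

/-- Let `(S, ⊤_S)` be a fine locality semigroup, `(X, ⊤_X)` a locality set,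
`f : (X, ⊤_X) → (S, ⊤_S)` a locality map, `n ≥ 2`, and `x₁, …, xₙ ∈ X` with
`(xᵢ, xᵢ₊₁) ∈ ⊤_X` for `i = 1, …, n−1`.  Then the iterated products
`f(x₁)⋯f(x_{n−1})` and `f(x₂)⋯f(xₙ)` are defined in `S`, and
`(f(x₁)⋯f(x_{n−1}), f(xₙ)) ∈ ⊤_S` and `(f(x₁), f(x₂)⋯f(xₙ)) ∈ ⊤_S`. -/
theorem fine_locality_semigroup_prod_rel {S : Type} (L : LocalitySemigroup S)
    (hfine : L.Fine) {X : Type} (topX : X → X → Prop) (f : X → S)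
    (hf : ∀ a b, topX a b → L.rel (f a) (f b))
    (n : ℕ) (hn : 2 ≤ n) (x : ℕ → X)
    (hx : ∀ i, 1 ≤ i → i < n → topX (x i) (x (i + 1))) :
    ∃ u v : S,
      IsLocProd L.rel L.mul ((List.range (n - 1)).map (fun i => f (x (i + 1)))) u ∧
      IsLocProd L.rel L.mul ((List.range (n - 1)).map (fun i => f (x (i + 2)))) v ∧
      L.rel u (f (x n)) ∧ L.rel (f (x 1)) v := by
  obtain ⟨m, rfl⟩ : ∃ m, n = m + 2 := ⟨n - 2, by omega⟩
  have hm1 : m + 2 - 1 = m + 1 := by omega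
  obtain ⟨u, hu, hulast, _⟩ :=
    aux_range_prod L hfine m (fun i => f (x (i + 1)))
      (fun i hi => hf _ _ (hx (i + 1) (by omega) (by omega)))
  obtain ⟨v, hv, _, hvhead⟩ :=
    aux_range_prod L hfine m (fun i => f (x (i + 2)))
      (fun i hi => hf _ _ (hx (i + 2) (by omega) (by omega)))
  rw [hm1]
  refine ⟨u, v, hu, hv, ?_, ?_⟩
  · exact hulast _ (hf _ _ (hx (m + 1) (by omega) (by omega)))
  · exact hvhead _ (hf _ _ (hx 1 (by omega) (by omega)))
end

section
/- Let (S, ⊤_S) be a fine locality semigroup, let (X, ⊤_X) be a locality set, let f : (X, ⊤_X) → (S, ⊤_S) be a locality map, and let m, n ≥ 1. Let x_1, …, x_m, y_1, …, y_n ∈ X with (x_i, x_{i+1}) ∈ ⊤_X for i = 1, …, m−1, (y_j, y_{j+1}) ∈ ⊤_X for j = 1, …, n−1, and (x_m, y_1) ∈ ⊤_X. Then the iterated products f(x_1)⋯f(x_m) and f(y_1)⋯f(y_n) are defined in S and (f(x_1)⋯f(x_m), f(y_1)⋯f(y_n)) ∈ ⊤_S. -/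

lemma locProd_rel_right {S : Type} (L : LocalitySemigroup S) (hfine : L.Fine)
    {l : List S} {v : S} (h : IsLocProd L.rel L.mul l v) :
    ∀ {a b : S}, l.head? = some b → L.rel a b → L.rel a v := by
  induction h with
  | single c =>
    intro a b hb hab
    simp only [List.head?] at hb
    cases hb
    exact hab
  | cons c hc hl ih =>
    intro a b hb hab
    simp only [List.head?] at hb
    cases hb
    exact (hfine.2 a c _ hc).mpr hab

lemma locProd_nonempty {S : Type} {rel : S → S → Prop} {mul : S → S → S}
    {l : List S} {v : S} (h : IsLocProd rel mul l v) : l ≠ [] := by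
  cases h <;> simp

lemma locProd_rel_left {S : Type} (L : LocalitySemigroup S) (hfine : L.Fine)
    {l : List S} {u : S} (h : IsLocProd L.rel L.mul l u) :
    ∀ {c d : S}, l.getLast? = some c → L.rel c d → L.rel u d := by
  induction h with
  | single a =>
    intro c d hc hcd
    simp only [List.getLast?_singleton] at hc
    cases hc
    exact hcd
  | cons a ha hl ih =>
    intro c d hc hcd
    obtain ⟨b, l', rfl⟩ := List.exists_cons_of_ne_nil (locProd_nonempty hl)
    rw [List.getLast?_cons_cons] at hc
    exact (hfine.1 a _ d ha).mpr (ih hc hcd)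

lemma locProd_exists {S : Type} (L : LocalitySemigroup S) (hfine : L.Fine) :
    ∀ (l : List S), List.Chain' L.rel l → l ≠ [] → ∃ u, IsLocProd L.rel L.mul l u := by
  intro l
  induction l with
  | nil => intro _ h; exact absurd rfl h
  | cons a l ih =>
    intro hchain _
    cases l with
    | nil => exact ⟨a, IsLocProd.single a⟩
    | cons b l' =>
      obtain ⟨u, hu⟩ := ih hchain.tail (by simp)
      have hab : L.rel a b := List.isChain_cons_cons.mp hchain |>.1
      have hau : L.rel a u := locProd_rel_right L hfine hu rfl hab
      exact ⟨L.mul a u, IsLocProd.cons a hau hu⟩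

/-- Let `(S, ⊤_S)` be a fine locality semigroup, `(X, ⊤_X)` a locality set,
`f : (X, ⊤_X) → (S, ⊤_S)` a locality map, and `m, n ≥ 1`.  Let
`x₁, …, x_m, y₁, …, yₙ ∈ X` with `(xᵢ, xᵢ₊₁) ∈ ⊤_X` for `i = 1, …, m−1`,
`(y_j, y_{j+1}) ∈ ⊤_X` for `j = 1, …, n−1`, and `(x_m, y₁) ∈ ⊤_X`.  Then the
iterated products `f(x₁)⋯f(x_m)` and `f(y₁)⋯f(yₙ)` are defined in `S` and
`(f(x₁)⋯f(x_m), f(y₁)⋯f(yₙ)) ∈ ⊤_S`. -/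
theorem fine_locality_semigroup_prod_rel_prod {S : Type} (L : LocalitySemigroup S)
    (hfine : L.Fine) {X : Type} (topX : X → X → Prop) (f : X → S)
    (hf : ∀ a b, topX a b → L.rel (f a) (f b))
    (m n : ℕ) (hm : 1 ≤ m) (hn : 1 ≤ n) (x y : ℕ → X)
    (hx : ∀ i, 1 ≤ i → i < m → topX (x i) (x (i + 1)))
    (hy : ∀ j, 1 ≤ j → j < n → topX (y j) (y (j + 1)))
    (hxy : topX (x m) (y 1)) :
    ∃ u v : S,
      IsLocProd L.rel L.mul ((List.range m).map (fun i => f (x (i + 1)))) u ∧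
      IsLocProd L.rel L.mul ((List.range n).map (fun j => f (y (j + 1)))) v ∧
      L.rel u v := by
  obtain ⟨m', rfl⟩ := Nat.exists_eq_add_of_le hm
  obtain ⟨n', rfl⟩ := Nat.exists_eq_add_of_le hn
  set g : ℕ → S := fun i => f (x (i + 1)) with hg
  set g' : ℕ → S := fun j => f (y (j + 1)) with hg'
  have hcx : List.Chain' L.rel ((List.range (1 + m')).map g) := by
    unfold List.Chain'
    rw [List.isChain_map, Nat.add_comm, List.isChain_range_succ]
    intro i hi
    exact hf _ _ (hx (i + 1) (Nat.le_add_left 1 i) (by omega))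
  have hcy : List.Chain' L.rel ((List.range (1 + n')).map g') := by
    unfold List.Chain'
    rw [List.isChain_map, Nat.add_comm, List.isChain_range_succ]
    intro j hj
    exact hf _ _ (hy (j + 1) (Nat.le_add_left 1 j) (by omega))
  obtain ⟨u, hu⟩ := locProd_exists L hfine _ hcx (by simp)
  obtain ⟨v, hv⟩ := locProd_exists L hfine _ hcy (by simp)
  refine ⟨u, v, hu, hv, ?_⟩
  have hlast : ((List.range (1 + m')).map g).getLast? = some (g m') := by
    rw [List.getLast?_eq_getElem?]
    simp [Nat.add_comm 1 m']
  have hhead : ((List.range (1 + n')).map g').head? = some (g' 0) := by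
    rw [List.head?_eq_getElem?]
    simp [Nat.add_comm 1 n']
  have hrel : L.rel (g m') v := by
    refine locProd_rel_right L hfine hv hhead ?_
    have : g m' = f (x (1 + m')) := by simp [hg, Nat.add_comm]
    rw [this]
    exact hf _ _ hxy
  exact locProd_rel_left L hfine hu hlast hrel
end
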